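/- Let $X$ be the completion of $C[0,2]$ in the norm $|\|f\|| = \sup_n \frac{1}{n!}\max_{t\in\varphi^{-n}(0)}|f(t)|$. Then the sequential Lorentz seminorm $l(x) = \inf\{\lim_n \|x_n\| : 0 \le x_n \uparrow |x|\}$ on $X$ is not a norm; specifically $l(\mathbb{1}) = 0$. -/

import Mathlib

/-- The tent map on `[0,1]`. -/
noncomputable def psi0 (t : ℝ) : ℝ := if t ≤ 1 / 2 then 2 * t else 2 - 2 * t

/-- The iterated tent map `ψ : [0,1] → [0,1]`: `ψ 0 = 0` and
`ψ t = 2⁻ⁿ ψ₀(2ⁿ t - 1)` for `t ∈ [2⁻ⁿ, 2⁻ⁿ⁺¹]` (here `n = -⌊log₂ t⌋`). -/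
noncomputable def psi (t : ℝ) : ℝ :=
  if t ≤ 0 then 0
  else (2 : ℝ) ^ (⌊Real.logb 2 t⌋) * psi0 ((2 : ℝ) ^ (-⌊Real.logb 2 t⌋) * t - 1)

/-- The map `φ : [0,2] → [0,2]`, `φ t = ψ t` on `[0,1]` and `φ t = ψ (2 - t)` on
`[1,2]`. -/
noncomputable def phi (t : ℝ) : ℝ := if t ≤ 1 then psi t else psi (2 - t)

lemma two_zpow_pos (m : ℤ) : (0:ℝ) < 2 ^ m := zpow_pos (by norm_num) m

lemma flogb {m : ℤ} {t : ℝ} (h1 : (2:ℝ)^m ≤ t) (h2 : t < 2^(m+1)) :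
    ⌊Real.logb 2 t⌋ = m := by
  have ht : 0 < t := lt_of_lt_of_le (two_zpow_pos m) h1
  have hb : (1:ℝ) < 2 := by norm_num
  rw [Int.floor_eq_iff]
  constructor
  · rw [Real.le_logb_iff_rpow_le hb ht]
    rwa [show ((m:ℝ)) = ((m:ℤ):ℝ) by norm_num, Real.rpow_intCast]
  · rw [Real.logb_lt_iff_lt_rpow hb ht]
    have : ((m:ℝ)+1) = (((m+1:ℤ)):ℝ) := by push_cast; ring
    rw [this, Real.rpow_intCast]
    exact h2

lemma psi_of_block {m : ℤ} {t : ℝ} (h1 : (2:ℝ)^m ≤ t) (h2 : t < 2^(m+1)) :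
    psi t = 2^m * psi0 (2^(-m) * t - 1) := by
  have ht : 0 < t := lt_of_lt_of_le (two_zpow_pos m) h1
  rw [psi, if_neg (not_le.2 ht), flogb h1 h2]

lemma psi_zpow (m : ℤ) : psi ((2:ℝ)^m) = 0 := by
  rw [psi_of_block (le_refl _) (by
    have := two_zpow_pos m
    calc (2:ℝ)^m < 2^m + 2^m := by linarith
    _ = 2^(m+1) := by rw [zpow_add_one₀ (by norm_num : (2:ℝ) ≠ 0)]; ring)]
  have : (2:ℝ)^(-m) * 2^m - 1 = 0 := by
    rw [← zpow_add₀ (by norm_num : (2:ℝ) ≠ 0)]; simp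
  rw [this, psi0]; norm_num

/-- up-piece formula -/
lemma psi_up {m : ℤ} {t : ℝ} (h1 : (2:ℝ)^m ≤ t) (h2 : t ≤ 3 * 2^(m-1)) :
    psi t = 2 * (t - 2^m) := by
  have e1 : (2:ℝ)^(m-1) * 2 = 2^m := by
    rw [show m = (m-1)+1 by ring, zpow_add_one₀ (by norm_num : (2:ℝ) ≠ 0)]; ring
  have h2' : t < 2^(m+1) := by
    have := two_zpow_pos (m-1)
    have : (3:ℝ) * 2^(m-1) < 4 * 2^(m-1) := by linarith
    have e2 : (4:ℝ) * 2^(m-1) = 2^(m+1) := by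
      rw [show m + 1 = (m-1)+1+1 by ring, zpow_add_one₀ (by norm_num : (2:ℝ) ≠ 0),
        zpow_add_one₀ (by norm_num : (2:ℝ) ≠ 0)]; ring
    linarith
  rw [psi_of_block h1 h2']
  have harg : (2:ℝ)^(-m) * t - 1 ≤ 1/2 := by
    have := two_zpow_pos (-m)
    have e3 : (2:ℝ)^(-m) * (3 * 2^(m-1)) = 3/2 := by
      rw [show (3:ℝ) * 2^(m-1) = 3 * (2^m / 2) by rw [← e1]; ring,
        show (2:ℝ)^(-m) = (2^m)⁻¹ by rw [zpow_neg]]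
      field_simp
    nlinarith [two_zpow_pos (-m), mul_le_mul_of_nonneg_left h2 (le_of_lt (two_zpow_pos (-m)))]
  rw [psi0, if_pos harg]
  have : (2:ℝ)^m * (2^(-m) * t) = t := by
    rw [show (2:ℝ)^m * (2^(-m) * t) = (2^m * 2^(-m)) * t by ring,
      ← zpow_add₀ (by norm_num : (2:ℝ) ≠ 0)]
    simp
  nlinarith [this]

lemma psi0_ge {s : ℝ} (h : 1/2 ≤ s) : psi0 s = 2 - 2 * s := by
  rw [psi0]; split
  · next h2 => have : s = 1/2 := le_antisymm h2 h; rw [this]; norm_num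
  · rfl

/-- down-piece formula -/
lemma psi_down {m : ℤ} {t : ℝ} (h1 : (3:ℝ) * 2^(m-1) ≤ t) (h2 : t ≤ 2^(m+1)) :
    psi t = 2 * (2^(m+1) - t) := by
  rcases eq_or_lt_of_le h2 with he | h2
  · rw [he, psi_zpow]; simp
  have e1 : (2:ℝ)^(m-1) * 2 = 2^m := by
    rw [show m = (m-1)+1 by ring, zpow_add_one₀ (by norm_num : (2:ℝ) ≠ 0)]; ring
  have h1' : (2:ℝ)^m ≤ t := by nlinarith [two_zpow_pos (m-1)]
  rw [psi_of_block h1' h2]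
  have hmul : ∀ x : ℝ, (2:ℝ)^m * ((2:ℝ)^(-m) * x) = x := by
    intro x
    rw [show (2:ℝ)^m * (2^(-m) * x) = (2^m * 2^(-m)) * x by ring,
      ← zpow_add₀ (by norm_num : (2:ℝ) ≠ 0)]
    simp
  have e3 : (2:ℝ)^(-m) * (3 * 2^(m-1)) = 3/2 := by
    rw [show (3:ℝ) * 2^(m-1) = 3 * (2^m / 2) by rw [← e1]; ring,
      show (2:ℝ)^(-m) = (2^m)⁻¹ by rw [zpow_neg]]
    field_simp
  have harg : 1/2 ≤ (2:ℝ)^(-m) * t - 1 := by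
    have := mul_le_mul_of_nonneg_left h1 (le_of_lt (two_zpow_pos (-m)))
    linarith [e3 ▸ this]
  rw [psi0_ge harg]
  have h4 : (2:ℝ)^m * ((2:ℝ)^(-m) * t) = t := hmul t
  have e5 : (2:ℝ)^m * 4 = 2 * 2^(m+1) := by
    rw [zpow_add_one₀ (by norm_num : (2:ℝ) ≠ 0)]; ring
  nlinarith [h4]

lemma logb_block {t : ℝ} (ht : 0 < t) :
    (2:ℝ)^(⌊Real.logb 2 t⌋) ≤ t ∧ t < 2^(⌊Real.logb 2 t⌋+1) := by
  have hb : (1:ℝ) < 2 := by norm_num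
  constructor
  · have h2 : (2:ℝ) ^ ((⌊Real.logb 2 t⌋:ℝ)) ≤ 2 ^ (Real.logb 2 t) :=
      Real.rpow_le_rpow_of_exponent_le (by norm_num) (Int.floor_le _)
    rwa [Real.rpow_logb (by norm_num) (by norm_num) ht, Real.rpow_intCast] at h2
  · have h2 : (2:ℝ) ^ (Real.logb 2 t) < 2 ^ ((⌊Real.logb 2 t⌋:ℝ)+1) :=
      Real.rpow_lt_rpow_of_exponent_lt hb (Int.lt_floor_add_one _)
    rw [Real.rpow_logb (by norm_num) (by norm_num) ht] at h2
    have e : ((⌊Real.logb 2 t⌋:ℝ)+1) = (((⌊Real.logb 2 t⌋+1 : ℤ)):ℝ) := by push_cast; ring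
    rwa [e, Real.rpow_intCast] at h2

lemma arg_mem {m : ℤ} {t : ℝ} (h1 : (2:ℝ)^m ≤ t) (h2 : t < 2^(m+1)) :
    0 ≤ (2:ℝ)^(-m) * t - 1 ∧ (2:ℝ)^(-m) * t - 1 < 1 := by
  have hp := two_zpow_pos m
  have key : (2:ℝ)^(-m) = (2^m)⁻¹ := by rw [zpow_neg]
  have e : ((2:ℝ)^m)⁻¹ * 2^m = 1 := inv_mul_cancel₀ (ne_of_gt hp)
  have e2 : (2:ℝ)^(m+1) = 2 * 2^m := by
    rw [zpow_add_one₀ (by norm_num : (2:ℝ) ≠ 0)]; ring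
  rw [key]
  constructor
  · nlinarith [mul_le_mul_of_nonneg_left h1 (le_of_lt (inv_pos.2 hp))]
  · nlinarith [mul_lt_mul_of_pos_left h2 (inv_pos.2 hp)]

lemma psi0_mem {s : ℝ} (h0 : 0 ≤ s) (h1 : s ≤ 1) : 0 ≤ psi0 s ∧ psi0 s ≤ 1 := by
  rw [psi0]; split <;> constructor <;> linarith

lemma psi_nonneg (t : ℝ) : 0 ≤ psi t := by
  rw [psi]; split
  · exact le_refl _
  · next h =>
    push_neg at h
    obtain ⟨h1, h2⟩ := logb_block h
    obtain ⟨ha1, ha2⟩ := arg_mem h1 h2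
    exact mul_nonneg (le_of_lt (two_zpow_pos _)) (psi0_mem ha1 (le_of_lt ha2)).1

lemma psi_le_pow {t : ℝ} (ht : 0 < t) : psi t ≤ 2^(⌊Real.logb 2 t⌋) := by
  obtain ⟨h1, h2⟩ := logb_block ht
  obtain ⟨ha1, ha2⟩ := arg_mem h1 h2
  rw [psi, if_neg (not_le.2 ht)]
  calc (2:ℝ)^(⌊Real.logb 2 t⌋) * psi0 (2^(-⌊Real.logb 2 t⌋)*t - 1)
      ≤ 2^(⌊Real.logb 2 t⌋) * 1 :=
        mul_le_mul_of_nonneg_left (psi0_mem ha1 (le_of_lt ha2)).2 (le_of_lt (two_zpow_pos _))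
    _ = 2^(⌊Real.logb 2 t⌋) := by ring

lemma psi_le_self {t : ℝ} (ht : 0 ≤ t) : psi t ≤ t := by
  rcases eq_or_lt_of_le ht with he | ht
  · rw [← he, psi]; norm_num
  · exact le_trans (psi_le_pow ht) (logb_block ht).1

lemma psi_one : psi 1 = 0 := by
  have := psi_zpow 0; norm_num at this; exact this

lemma psi_le_half {t : ℝ} (ht : t ≤ 1) : psi t ≤ 1/2 := by
  rcases le_or_gt t 0 with h | h
  · rw [psi, if_pos h]; norm_num
  rcases eq_or_lt_of_le ht with he | ht
  · rw [he, psi_one]; norm_num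
  · refine le_trans (psi_le_pow h) ?_
    have hm : ⌊Real.logb 2 t⌋ + 1 ≤ 0 := by
      by_contra hc
      push_neg at hc
      have h1 := (logb_block h).1
      have h3 : (2:ℝ)^(0:ℤ) ≤ 2^(⌊Real.logb 2 t⌋) :=
        zpow_le_zpow_right₀ (by norm_num) (by omega)
      rw [zpow_zero] at h3; linarith
    calc (2:ℝ)^(⌊Real.logb 2 t⌋) ≤ 2^(-1:ℤ) :=
          zpow_le_zpow_right₀ (by norm_num) (by omega)
      _ = 1/2 := by norm_num

lemma psi_eq_zero_pow {t : ℝ} (ht : 0 < t) (h : psi t = 0) :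
    t = 2^(⌊Real.logb 2 t⌋) := by
  obtain ⟨h1, h2⟩ := logb_block ht
  obtain ⟨ha1, ha2⟩ := arg_mem h1 h2
  rw [psi, if_neg (not_le.2 ht)] at h
  set m := ⌊Real.logb 2 t⌋
  have hz : psi0 ((2:ℝ)^(-m) * t - 1) = 0 := by
    rcases mul_eq_zero.1 h with h' | h'
    · exact absurd h' (ne_of_gt (two_zpow_pos m))
    · exact h'
  have harg0 : (2:ℝ)^(-m) * t - 1 = 0 := by
    rw [psi0] at hz
    rcases le_or_gt ((2:ℝ)^(-m) * t - 1) (1/2) with hh | hh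
    · rw [if_pos hh] at hz; linarith
    · rw [if_neg (not_le.2 hh)] at hz; linarith
  have h5 : (2:ℝ)^(-m) * t = 1 := by linarith
  have h6 := congrArg (fun x => (2:ℝ)^m * x) h5
  rw [show (2:ℝ)^m * ((2:ℝ)^(-m) * t) = (2^m * 2^(-m)) * t by ring,
    ← zpow_add₀ (by norm_num : (2:ℝ) ≠ 0)] at h6
  simp at h6
  linarith [h6]

lemma psi_half (t : ℝ) : psi (t/2) = psi t / 2 := by
  rcases le_or_gt t 0 with h | h
  · rw [psi, if_pos (show t/2 ≤ 0 by linarith), psi, if_pos h]; norm_num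
  · have ht2 : 0 < t/2 := by linarith
    have hlog : Real.logb 2 (t/2) = Real.logb 2 t - 1 := by
      rw [Real.logb_div (ne_of_gt h) (by norm_num)]
      simp [Real.logb_self_eq_one]
    have hfloor : ⌊Real.logb 2 (t/2)⌋ = ⌊Real.logb 2 t⌋ - 1 := by
      rw [hlog]
      exact_mod_cast Int.floor_sub_intCast (Real.logb 2 t) 1
    rw [psi, if_neg (not_le.2 ht2), psi, if_neg (not_le.2 h), hfloor]
    have e1 : (2:ℝ)^(⌊Real.logb 2 t⌋ - 1) = 2^(⌊Real.logb 2 t⌋) / 2 := by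
      rw [zpow_sub₀ (by norm_num : (2:ℝ) ≠ 0)]; norm_num
    have e2 : (2:ℝ)^(-(⌊Real.logb 2 t⌋ - 1)) * (t/2) = 2^(-⌊Real.logb 2 t⌋) * t := by
      rw [show -(⌊Real.logb 2 t⌋ - 1) = -⌊Real.logb 2 t⌋ + 1 by ring,
        zpow_add_one₀ (by norm_num : (2:ℝ) ≠ 0)]
      ring
    rw [e1, e2]; ring

lemma abs_psi_le (s : ℝ) : |psi s| ≤ |s| := by
  rcases le_or_gt s 0 with h | h
  · rw [psi, if_pos h]; simp
  · rw [abs_of_nonneg (psi_nonneg s), abs_of_nonneg (le_of_lt h)]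
    exact psi_le_self (le_of_lt h)

lemma psi_zero : psi 0 = 0 := by rw [psi]; norm_num

lemma psi0_continuous : Continuous psi0 := by
  apply Continuous.if_le (by continuity) (by continuity) continuous_id continuous_const
  intro x hx; simp only [id] at hx; rw [hx]; norm_num

lemma psi_continuous : Continuous psi := by
  rw [continuous_iff_continuousAt]
  intro t
  rcases lt_trichotomy t 0 with ht | ht | ht
  · have h : psi =ᶠ[nhds t] (fun _ => 0) := by
      filter_upwards [Iio_mem_nhds ht] with s hs
      rw [psi, if_pos (le_of_lt hs)]
    exact (continuousAt_congr h).2 continuousAt_const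
  · subst ht
    rw [Metric.continuousAt_iff]
    intro ε hε
    refine ⟨ε, hε, fun {s} hs => ?_⟩
    rw [Real.dist_eq] at hs ⊢
    rw [psi_zero, sub_zero]
    calc |psi s| ≤ |s| := abs_psi_le s
      _ = |s - 0| := by rw [sub_zero]
      _ < ε := hs
  · set m := ⌊Real.logb 2 t⌋ with hm
    obtain ⟨h1, h2⟩ := logb_block ht
    rw [← hm] at h1 h2
    rcases eq_or_lt_of_le h1 with he | h1
    · -- t = 2^m : psi s = 2|s-t| locally
      rw [Metric.continuousAt_iff]
      intro ε hε
      have hq := two_zpow_pos (m-2)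
      refine ⟨min ((2:ℝ)^(m-2)) (ε/2), lt_min hq (by linarith), fun {s} hs => ?_⟩
      rw [Real.dist_eq] at hs ⊢
      have hs1 : |s - t| < (2:ℝ)^(m-2) := lt_of_lt_of_le hs (min_le_left _ _)
      have hs2 : |s - t| < ε/2 := lt_of_lt_of_le hs (min_le_right _ _)
      have e1 : (2:ℝ)^(m-2) * 2 = 2^(m-1) := by
        rw [show m - 1 = (m-2)+1 by ring, zpow_add_one₀ (by norm_num : (2:ℝ) ≠ 0)]
      have e2 : (2:ℝ)^(m-1) * 2 = 2^m := by
        have h := zpow_add_one₀ (by norm_num : (2:ℝ) ≠ 0) (m-1)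
        rw [show m-1+1 = m by ring] at h; linarith
      have habs : psi s = 2 * |s - t| := by
        rcases le_or_gt s t with hle | hlt
        · have hge : 3 * (2:ℝ)^(m-2) ≤ s := by
            nlinarith [(abs_lt.1 hs1).1]
          have hds : psi s = 2 * ((2:ℝ)^m - s) := by
            have key := psi_down (m := m-1) (t := s)
              (by rw [show m-1-1 = m-2 by ring]; exact hge)
              (by rw [show (m-1)+1 = m by ring]; linarith)
            rw [show (m-1)+1 = m by ring] at key; exact key
          rw [hds, abs_of_nonpos (by linarith : s - t ≤ 0)]; linarith
        · have hup : s ≤ 3 * (2:ℝ)^(m-1) := by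
            nlinarith [(abs_lt.1 hs1).2]
          have hus : psi s = 2 * (s - 2^m) := psi_up (by linarith) hup
          rw [hus, abs_of_pos (by linarith : 0 < s - t)]; linarith
      have hpt : psi t = 0 := by rw [← he]; exact psi_zpow m
      rw [habs, hpt, sub_zero, abs_of_nonneg (by positivity)]
      linarith [abs_nonneg (s - t)]
    · -- 2^m < t < 2^(m+1) : locally equal to a continuous formula
      have hopen : Set.Ioo ((2:ℝ)^m) (2^(m+1)) ∈ nhds t := Ioo_mem_nhds h1 h2
      have h : psi =ᶠ[nhds t] (fun s => (2:ℝ)^m * psi0 (2^(-m) * s - 1)) := by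
        filter_upwards [hopen] with s hs
        have hfl : ⌊Real.logb 2 s⌋ = m := flogb (le_of_lt hs.1) hs.2
        rw [psi, if_neg (not_le.2 (lt_trans (two_zpow_pos m) hs.1)), hfl]
      refine (continuousAt_congr h).2 ?_
      exact (continuous_const.mul (psi0_continuous.comp (by continuity))).continuousAt

lemma phi_continuous : Continuous phi := by
  apply Continuous.if_le psi_continuous (psi_continuous.comp (by continuity))
    continuous_id continuous_const
  intro x hx; simp only [id] at hx; rw [hx]; norm_num

/-- The level set `φ⁻⁽ⁿ⁺¹⁾(0)` inside `[0,2]` (indexing so that `Z 0 = φ⁻¹(0)`). -/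
def Zlevel (n : ℕ) : Set (Set.Icc (0 : ℝ) 2) :=
  {t : Set.Icc (0 : ℝ) 2 | phi^[n + 1] (t : ℝ) = 0}

/-- The norm `|‖f‖| = sup_{n ≥ 1} (1/n!) max_{t ∈ φ⁻ⁿ(0)} |f t|` on `C[0,2]`. -/
noncomputable def tnorm (f : C(Set.Icc (0 : ℝ) 2, ℝ)) : ℝ :=
  ⨆ n : ℕ, (((n + 1).factorial : ℝ))⁻¹ *
    sSup ((fun t : Set.Icc (0 : ℝ) 2 => |f t|) '' Zlevel n)

lemma phi_zero : phi 0 = 0 := by rw [phi, if_pos (by norm_num)]; exact psi_zero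

lemma phi_le_one {t : ℝ} (h : t ≤ 1) : phi t = psi t := by rw [phi, if_pos h]

lemma phi_ge_one {t : ℝ} (h : 1 ≤ t) : phi t = psi (2 - t) := by
  rcases eq_or_lt_of_le h with he | h
  · rw [phi, if_pos (le_of_eq he.symm), ← he]; norm_num
  · rw [phi, if_neg (not_le.2 h)]

lemma phi_iter_psi {t : ℝ} (h : t ≤ 1) (j : ℕ) : phi^[j] t = psi^[j] t := by
  induction j generalizing t with
  | zero => simp
  | succ j ih =>
    rw [Function.iterate_succ_apply, Function.iterate_succ_apply, phi_le_one h,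
      ih (by linarith [psi_le_half h])]

lemma phi_iter_sym {t : ℝ} (h : 1 ≤ t) (j : ℕ) : phi^[j+1] t = psi^[j+1] (2 - t) := by
  rw [Function.iterate_succ_apply, Function.iterate_succ_apply, phi_ge_one h]
  exact phi_iter_psi (by linarith [psi_le_half (show 2 - t ≤ 1 by linarith)]
    : psi (2-t) ≤ 1) j |>.trans rfl

lemma phi_iter_zero (j : ℕ) : phi^[j] 0 = 0 := by
  induction j with
  | zero => rfl
  | succ j ih => rw [Function.iterate_succ_apply, phi_zero, ih]

lemma psi_iter_half (j : ℕ) (x : ℝ) : psi^[j] (x/2) = psi^[j] x / 2 := by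
  induction j generalizing x with
  | zero => simp
  | succ j ih =>
    rw [Function.iterate_succ_apply, Function.iterate_succ_apply, psi_half, ih]

-- the base point 0 of Icc 0 2
noncomputable def z0 : Set.Icc (0:ℝ) 2 := ⟨0, by norm_num⟩

lemma z0_mem (n : ℕ) : z0 ∈ Zlevel n := by
  show phi^[n+1] ((0:ℝ)) = 0
  exact phi_iter_zero (n+1)

lemma Zlevel_mono {m n : ℕ} (h : m ≤ n) : Zlevel m ⊆ Zlevel n := by
  intro t ht
  show phi^[n+1] (t:ℝ) = 0
  have : n + 1 = (n - m) + (m + 1) := by omega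
  rw [this, Function.iterate_add_apply, ht, phi_iter_zero]

lemma Zlevel_closed (n : ℕ) : IsClosed (Zlevel n) := by
  have : Zlevel n = (fun t : Set.Icc (0:ℝ) 2 => phi^[n+1] (t:ℝ)) ⁻¹' {0} := rfl
  rw [this]
  exact IsClosed.preimage ((phi_continuous.iterate (n+1)).comp continuous_subtype_val)
    isClosed_singleton

lemma tnorm_term_bddAbove (f : C(Set.Icc (0 : ℝ) 2, ℝ)) (n : ℕ) :
    BddAbove ((fun t : Set.Icc (0 : ℝ) 2 => |f t|) '' Zlevel n) := by
  refine ⟨‖f‖, fun y hy => ?_⟩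
  obtain ⟨t, _, rfl⟩ := hy
  simpa [Real.norm_eq_abs] using f.norm_coe_le_norm t

lemma tnorm_term_le (f : C(Set.Icc (0 : ℝ) 2, ℝ)) (n : ℕ) :
    (((n + 1).factorial : ℝ))⁻¹ * sSup ((fun t : Set.Icc (0 : ℝ) 2 => |f t|) '' Zlevel n)
      ≤ ‖f‖ := by
  have h1 : sSup ((fun t : Set.Icc (0 : ℝ) 2 => |f t|) '' Zlevel n) ≤ ‖f‖ := by
    apply csSup_le (Set.Nonempty.image _ ⟨z0, z0_mem n⟩)
    rintro y ⟨t, _, rfl⟩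
    simpa [Real.norm_eq_abs] using f.norm_coe_le_norm t
  have h0 : 0 ≤ sSup ((fun t : Set.Icc (0 : ℝ) 2 => |f t|) '' Zlevel n) :=
    le_csSup_of_le (tnorm_term_bddAbove f n) ⟨z0, z0_mem n, rfl⟩ (abs_nonneg _)
  have hfac : (((n + 1).factorial : ℝ))⁻¹ ≤ 1 := by
    rw [inv_le_one_iff₀]; right
    exact_mod_cast Nat.one_le_iff_ne_zero.2 (Nat.factorial_ne_zero _)
  nlinarith [norm_nonneg f]

lemma tnorm_bddAbove (f : C(Set.Icc (0 : ℝ) 2, ℝ)) :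
    BddAbove (Set.range fun n : ℕ => (((n + 1).factorial : ℝ))⁻¹ *
      sSup ((fun t : Set.Icc (0 : ℝ) 2 => |f t|) '' Zlevel n)) := by
  refine ⟨‖f‖, fun y hy => ?_⟩
  obtain ⟨n, rfl⟩ := hy
  exact tnorm_term_le f n

lemma tnorm_le (f : C(Set.Icc (0 : ℝ) 2, ℝ)) {B : ℝ}
    (h : ∀ n : ℕ, (((n + 1).factorial : ℝ))⁻¹ *
      sSup ((fun t : Set.Icc (0 : ℝ) 2 => |f t|) '' Zlevel n) ≤ B) : tnorm f ≤ B :=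
  ciSup_le h

lemma tnorm_eval {f : C(Set.Icc (0 : ℝ) 2, ℝ)} {n : ℕ} {t : Set.Icc (0:ℝ) 2}
    (ht : t ∈ Zlevel n) : |f t| ≤ ((n+1).factorial : ℝ) * tnorm f := by
  have h1 : |f t| ≤ sSup ((fun t : Set.Icc (0 : ℝ) 2 => |f t|) '' Zlevel n) :=
    le_csSup (tnorm_term_bddAbove f n) ⟨t, ht, rfl⟩
  have h2 : (((n + 1).factorial : ℝ))⁻¹ *
      sSup ((fun t : Set.Icc (0 : ℝ) 2 => |f t|) '' Zlevel n) ≤ tnorm f :=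
    le_ciSup (tnorm_bddAbove f) n
  have hfac : (0:ℝ) < ((n+1).factorial : ℝ) := by
    exact_mod_cast Nat.factorial_pos _
  rw [← mul_le_mul_iff_right₀ (inv_pos.2 hfac)]
  calc (((n+1).factorial:ℝ))⁻¹ * |f t|
      ≤ (((n+1).factorial:ℝ))⁻¹ * sSup ((fun t : Set.Icc (0 : ℝ) 2 => |f t|) '' Zlevel n) := by
        exact mul_le_mul_of_nonneg_left h1 (le_of_lt (inv_pos.2 hfac))
    _ ≤ tnorm f := h2
    _ = (((n+1).factorial:ℝ))⁻¹ * (((n+1).factorial:ℝ) * tnorm f) := by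
        field_simp


noncomputable def xstar : ℕ → ℝ
  | 0 => 1/2
  | n+1 => 1/4 + xstar n / 4

lemma xstar_bounds (n : ℕ) : 0 < xstar n ∧ xstar n ≤ 1/2 := by
  induction n with
  | zero => rw [xstar]; norm_num
  | succ n ih => rw [xstar]; constructor <;> [linarith [ih.1]; linarith [ih.2]]

lemma psi_half_up {x : ℝ} (hx0 : 0 < x) (hx : x ≤ 1/2) : psi (1/2 + x/2) = x := by
  have h := psi_up (m := -1) (t := 1/2 + x/2) (by norm_num; linarith) (by push_cast; norm_num; linarith)
  norm_num at h
  rw [h]; ring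

lemma xstar_spec (n : ℕ) : psi^[n+1] (xstar n) = 0 ∧ psi^[n] (xstar n) ≠ 0 := by
  induction n with
  | zero =>
    constructor
    · show psi^[1] (1/2) = 0
      rw [Function.iterate_one]
      have := psi_zpow (-1)
      norm_num at this
      exact this
    · show psi^[0] (1/2) ≠ 0
      norm_num
  | succ n ih =>
    have hb := xstar_bounds n
    have hx : xstar (n+1) = (1/2 + xstar n / 2)/2 := by rw [xstar]; ring
    have hpsi : psi (xstar (n+1)) = xstar n / 2 := by
      rw [hx, psi_half, psi_half_up hb.1 hb.2]
    constructor
    · rw [Function.iterate_succ_apply, hpsi]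
      have : xstar n / 2 = xstar n / 2 := rfl
      rw [show xstar n / 2 = (xstar n) / 2 from rfl, psi_iter_half, ih.1]
      norm_num
    · rw [Function.iterate_succ_apply, hpsi, psi_iter_half]
      intro hcon
      exact ih.2 (by field_simp at hcon; linarith)

lemma psi_iter_div_pow (k j : ℕ) (x : ℝ) : psi^[j] (x / 2^k) = psi^[j] x / 2^k := by
  induction k with
  | zero => simp
  | succ k ih =>
    have e : x / 2^(k+1) = (x / 2^k) / 2 := by rw [pow_succ]; ring
    rw [e, psi_iter_half, ih]
    rw [pow_succ]; ring

lemma Asmall (n : ℕ) {η : ℝ} (hη : 0 < η) :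
    ∃ x : ℝ, 0 < x ∧ x < η ∧ psi^[n+1] x = 0 ∧ psi^[n] x ≠ 0 := by
  obtain ⟨hx0, hx12⟩ := xstar_bounds n
  obtain ⟨hz, hnz⟩ := xstar_spec n
  obtain ⟨k, hk⟩ := pow_unbounded_of_one_lt (R := ℝ) (xstar n / η) (by norm_num : (1:ℝ) < 2)
  refine ⟨xstar n / 2^k, by positivity, ?_, ?_, ?_⟩
  · rw [div_lt_iff₀ (by positivity)] at hk ⊢
    nlinarith [pow_pos (show (0:ℝ) < 2 by norm_num) k]
  · rw [psi_iter_div_pow, hz]; norm_num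
  · rw [psi_iter_div_pow]
    intro hcon
    apply hnz
    field_simp at hcon
    linarith

-- V-point case helpers
lemma pow_of_zero {t₀ : ℝ} (ht0 : 0 < t₀) (hz : psi t₀ = 0) :
    t₀ = 2^(⌊Real.logb 2 t₀⌋) := psi_eq_zero_pow ht0 hz

lemma m_le_zero {m : ℤ} {t₀ : ℝ} (he : t₀ = (2:ℝ)^m) (ht1 : t₀ ≤ 1) : m ≤ 0 := by
  by_contra hc
  push_neg at hc
  have : (2:ℝ)^(1:ℤ) ≤ 2^m := zpow_le_zpow_right₀ (by norm_num) (by omega)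
  norm_num at this
  rw [he] at ht1
  linarith

lemma m_le_neg_one {m : ℤ} {t₀ : ℝ} (he : t₀ = (2:ℝ)^m) (ht1 : t₀ < 1) : m ≤ -1 := by
  by_contra hc
  push_neg at hc
  have : (2:ℝ)^(0:ℤ) ≤ 2^m := zpow_le_zpow_right₀ (by norm_num) (by omega)
  rw [zpow_zero] at this
  rw [he] at ht1
  linarith

lemma zpow_sub_one_half (m : ℤ) : (2:ℝ)^(m-1) = 2^m / 2 := by
  rw [zpow_sub₀ (by norm_num : (2:ℝ) ≠ 0)]; norm_num

lemma zpow_add_one_two (m : ℤ) : (2:ℝ)^(m+1) = 2^m * 2 := by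
  rw [zpow_add_one₀ (by norm_num : (2:ℝ) ≠ 0)]

/-- left of a V-point: psi (2^m - x/2) = x for 0 < x ≤ 2^(m-1) -/
lemma psi_V_left {m : ℤ} {x : ℝ} (hx0 : 0 < x) (hx : x ≤ 2^(m-1)) :
    psi ((2:ℝ)^m - x/2) = x := by
  have e1 := zpow_sub_one_half m
  have e2 := zpow_sub_one_half (m-1)
  have h := psi_down (m := m-1) (t := (2:ℝ)^m - x/2)
    (by rw [show m-1-1 = m-2 by ring] at *; nlinarith [zpow_sub_one_half (m-1),
        zpow_sub_one_half m, two_zpow_pos (m-2)])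
    (by rw [show m-1+1 = m by ring]; linarith)
  rw [show m-1+1 = m by ring] at h
  rw [h]; ring

/-- right of a V-point: psi (2^m + x/2) = x for 0 < x ≤ 2^m -/
lemma psi_V_right {m : ℤ} {x : ℝ} (hx0 : 0 < x) (hx : x ≤ 2^m) :
    psi ((2:ℝ)^m + x/2) = x := by
  have e1 := zpow_sub_one_half m
  have h := psi_up (m := m) (t := (2:ℝ)^m + x/2)
    (by nlinarith) (by nlinarith)
  rw [h]; ring

/-- anatomy of a point with psi t₀ > 0 in (0,1] -/
lemma anatomy {t₀ : ℝ} (ht0 : 0 < t₀) (ht1 : t₀ ≤ 1) (hu : 0 < psi t₀) :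
    ∃ m : ℤ, m ≤ -1 ∧ (2:ℝ)^m < t₀ ∧ t₀ < 2^(m+1) ∧
      ((t₀ ≤ 3 * 2^(m-1) ∧ psi t₀ = 2*(t₀ - 2^m)) ∨
       (3 * 2^(m-1) < t₀ ∧ psi t₀ = 2*(2^(m+1) - t₀))) := by
  have ht1' : t₀ < 1 := by
    rcases eq_or_lt_of_le ht1 with he | h
    · rw [he, psi_one] at hu; linarith
    · exact h
  set m := ⌊Real.logb 2 t₀⌋ with hm
  obtain ⟨h1, h2⟩ := logb_block ht0
  rw [← hm] at h1 h2
  have hne : (2:ℝ)^m ≠ t₀ := by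
    intro he
    rw [← he, psi_zpow] at hu
    linarith
  have h1' : (2:ℝ)^m < t₀ := lt_of_le_of_ne h1 hne
  have hm1 : m ≤ -1 := by
    by_contra hc
    push_neg at hc
    have : (2:ℝ)^(0:ℤ) ≤ 2^m := zpow_le_zpow_right₀ (by norm_num) (by omega)
    rw [zpow_zero] at this
    linarith
  refine ⟨m, hm1, h1', h2, ?_⟩
  rcases le_or_gt t₀ (3 * 2^(m-1)) with hc | hc
  · exact Or.inl ⟨hc, psi_up h1 hc⟩
  · exact Or.inr ⟨hc, psi_down (le_of_lt hc) (le_of_lt h2)⟩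

def Lstat (n : ℕ) : Prop := ∀ t₀ : ℝ, 0 < t₀ → t₀ ≤ 1 → psi^[n+1] t₀ = 0 → ∀ η : ℝ, 0 < η →
  ∃ s, 0 < s ∧ s < t₀ ∧ t₀ - s < η ∧ psi^[n+2] s = 0 ∧ psi^[n+1] s ≠ 0

def Rstat (n : ℕ) : Prop := ∀ t₀ : ℝ, 0 < t₀ → t₀ < 1 → psi^[n+1] t₀ = 0 → ∀ η : ℝ, 0 < η →
  ∃ s, t₀ < s ∧ s ≤ 1 ∧ s - t₀ < η ∧ psi^[n+2] s = 0 ∧ psi^[n+1] s ≠ 0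

/-- V-point construction, left side -/
lemma Vleft (n : ℕ) {t₀ : ℝ} (ht0 : 0 < t₀) (ht1 : t₀ ≤ 1) (hz : psi t₀ = 0)
    {η : ℝ} (hη : 0 < η) :
    ∃ s, 0 < s ∧ s < t₀ ∧ t₀ - s < η ∧ psi^[n+2] s = 0 ∧ psi^[n+1] s ≠ 0 := by
  set m := ⌊Real.logb 2 t₀⌋ with hm
  have he : t₀ = 2^m := pow_of_zero ht0 hz
  obtain ⟨x, hx0, hxs, hxz, hxnz⟩ := Asmall n (lt_min hη (two_zpow_pos (m-1)))
  have hxη : x < η := lt_of_lt_of_le hxs (min_le_left _ _)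
  have hxm : x < 2^(m-1) := lt_of_lt_of_le hxs (min_le_right _ _)
  refine ⟨t₀ - x/2, ?_, by linarith, by linarith, ?_, ?_⟩
  · have := zpow_sub_one_half m
    rw [he]; nlinarith [two_zpow_pos (m-1)]
  · rw [Function.iterate_succ_apply, he, psi_V_left hx0 (le_of_lt hxm), hxz]
  · rw [Function.iterate_succ_apply, he, psi_V_left hx0 (le_of_lt hxm)]
    exact hxnz

/-- V-point construction, right side -/
lemma Vright (n : ℕ) {t₀ : ℝ} (ht0 : 0 < t₀) (ht1 : t₀ < 1) (hz : psi t₀ = 0)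
    {η : ℝ} (hη : 0 < η) :
    ∃ s, t₀ < s ∧ s ≤ 1 ∧ s - t₀ < η ∧ psi^[n+2] s = 0 ∧ psi^[n+1] s ≠ 0 := by
  set m := ⌊Real.logb 2 t₀⌋ with hm
  have he : t₀ = 2^m := pow_of_zero ht0 hz
  have hm1 : m ≤ -1 := m_le_neg_one he ht1
  obtain ⟨x, hx0, hxs, hxz, hxnz⟩ := Asmall n (lt_min hη (two_zpow_pos m))
  have hxη : x < η := lt_of_lt_of_le hxs (min_le_left _ _)
  have hxm : x < 2^m := lt_of_lt_of_le hxs (min_le_right _ _)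
  refine ⟨t₀ + x/2, by linarith, ?_, by linarith, ?_, ?_⟩
  · -- t₀ + x/2 ≤ 2^m + 2^(m-1) ≤ 3/4
    have e1 := zpow_sub_one_half m
    have h34 : (2:ℝ)^(m-1) ≤ 2^(-2:ℤ) := zpow_le_zpow_right₀ (by norm_num) (by omega)
    have h12 : (2:ℝ)^m ≤ 2^(-1:ℤ) := zpow_le_zpow_right₀ (by norm_num) (by omega)
    norm_num at h34 h12
    rw [he]; nlinarith
  · rw [Function.iterate_succ_apply, he, psi_V_right hx0 (le_of_lt hxm), hxz]
  · rw [Function.iterate_succ_apply, he, psi_V_right hx0 (le_of_lt hxm)]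
    exact hxnz

lemma GG : ∀ n : ℕ, Lstat n ∧ Rstat n := by
  intro n
  induction n with
  | zero =>
    constructor
    · intro t₀ ht0 ht1 hz η hη
      rw [Function.iterate_one] at hz
      exact Vleft 0 ht0 ht1 hz hη
    · intro t₀ ht0 ht1 hz η hη
      rw [Function.iterate_one] at hz
      exact Vright 0 ht0 ht1 hz hη
  | succ n ih =>
    obtain ⟨ihL, ihR⟩ := ih
    constructor
    · -- Lstat (n+1)
      intro t₀ ht0 ht1 hz η hη
      have hz' : psi^[n+1] (psi t₀) = 0 := by
        rw [← Function.iterate_succ_apply]; exact hz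
      rcases eq_or_lt_of_le (psi_nonneg t₀) with hu | hu
      · exact Vleft (n+1) ht0 ht1 hu.symm hη
      · obtain ⟨m, hm1, hml, hmr, hcase⟩ := anatomy ht0 ht1 hu
        have hu1 : psi t₀ ≤ 1 := le_trans (psi_le_half ht1) (by norm_num)
        have hu1' : psi t₀ < 1 := lt_of_le_of_lt (psi_le_half ht1) (by norm_num)
        have e1 := zpow_sub_one_half m
        have e2 := zpow_add_one_two m
        rcases hcase with ⟨hup, hfo⟩ | ⟨hdn, hfo⟩
        · -- up piece: use ihL at u, s = 2^m + u'/2 < t₀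
          obtain ⟨u', hu'0, hu'lt, hu'η, hu'z, hu'nz⟩ :=
            ihL (psi t₀) hu hu1 hz' (2*η) (by linarith)
          have hu'le : u' ≤ 2^m := by linarith
          refine ⟨2^m + u'/2, by positivity, by linarith, by linarith, ?_, ?_⟩
          · rw [Function.iterate_succ_apply, psi_V_right hu'0 hu'le, hu'z]
          · rw [Function.iterate_succ_apply, psi_V_right hu'0 hu'le]
            exact hu'nz
        · -- down piece: use ihR at u, s = 2^(m+1) - u'/2 < t₀
          have humax : psi t₀ < 2^m := by linarith
          obtain ⟨u', hu'gt, hu'le1, hu'η, hu'z, hu'nz⟩ :=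
            ihR (psi t₀) hu hu1' hz' (min (2*η) (2^m - psi t₀))
              (lt_min (by linarith) (by linarith))
          have hu'η2 : u' - psi t₀ < 2*η := lt_of_lt_of_le hu'η (min_le_left _ _)
          have hu'lem : u' < 2^m := by
            have := lt_of_lt_of_le hu'η (min_le_right _ _); linarith
          have hs : psi ((2:ℝ)^(m+1) - u'/2) = u' :=
            psi_V_left (m := m+1) (x := u') (by linarith)
              (by rw [show m+1-1 = m by ring]; linarith)
          refine ⟨2^(m+1) - u'/2, by linarith, by linarith, by linarith, ?_, ?_⟩
          · rw [Function.iterate_succ_apply, hs, hu'z]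
          · rw [Function.iterate_succ_apply, hs]; exact hu'nz
    · -- Rstat (n+1)
      intro t₀ ht0 ht1 hz η hη
      have hz' : psi^[n+1] (psi t₀) = 0 := by
        rw [← Function.iterate_succ_apply]; exact hz
      rcases eq_or_lt_of_le (psi_nonneg t₀) with hu | hu
      · exact Vright (n+1) ht0 ht1 hu.symm hη
      · obtain ⟨m, hm1, hml, hmr, hcase⟩ := anatomy ht0 (le_of_lt ht1) hu
        have hu1 : psi t₀ ≤ 1 := le_trans (psi_le_half (le_of_lt ht1)) (by norm_num)
        have hu1' : psi t₀ < 1 := lt_of_le_of_lt (psi_le_half (le_of_lt ht1)) (by norm_num)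
        have e1 := zpow_sub_one_half m
        have e2 := zpow_add_one_two m
        have h12 : (2:ℝ)^(m+1) ≤ 2^(0:ℤ) := zpow_le_zpow_right₀ (by norm_num) (by omega)
        rw [zpow_zero] at h12
        rcases hcase with ⟨hup, hfo⟩ | ⟨hdn, hfo⟩
        · rcases lt_or_eq_of_le hup with hup' | htop
          · -- strict up piece: use ihR at u, s = 2^m + u'/2 > t₀
            have humax : psi t₀ < 2^m := by linarith
            obtain ⟨u', hu'gt, hu'le1, hu'η, hu'z, hu'nz⟩ :=
              ihR (psi t₀) hu hu1' hz' (min (2*η) (2^m - psi t₀))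
                (lt_min (by linarith) (by linarith))
            have hu'η2 : u' - psi t₀ < 2*η := lt_of_lt_of_le hu'η (min_le_left _ _)
            have hu'lem : u' < 2^m := by
              have := lt_of_lt_of_le hu'η (min_le_right _ _); linarith
            refine ⟨2^m + u'/2, by linarith, by linarith, by linarith, ?_, ?_⟩
            · rw [Function.iterate_succ_apply, psi_V_right (by linarith) (le_of_lt hu'lem), hu'z]
            · rw [Function.iterate_succ_apply, psi_V_right (by linarith) (le_of_lt hu'lem)]
              exact hu'nz
          · -- top: psi t₀ = 2^m, use ihL at u, s = 2^(m+1) - u'/2 > t₀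
            obtain ⟨u', hu'0, hu'lt, hu'η, hu'z, hu'nz⟩ :=
              ihL (psi t₀) hu hu1 hz' (2*η) (by linarith)
            have hueq : psi t₀ = 2^m := by linarith
            have hu'lem : u' < 2^m := by linarith
            have hs : psi ((2:ℝ)^(m+1) - u'/2) = u' :=
              psi_V_left (m := m+1) (x := u') hu'0
                (by rw [show m+1-1 = m by ring]; linarith)
            refine ⟨2^(m+1) - u'/2, by linarith, by linarith, by linarith, ?_, ?_⟩
            · rw [Function.iterate_succ_apply, hs, hu'z]
            · rw [Function.iterate_succ_apply, hs]; exact hu'nz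
        · -- down piece: use ihL at u, s = 2^(m+1) - u'/2 > t₀
          obtain ⟨u', hu'0, hu'lt, hu'η, hu'z, hu'nz⟩ :=
            ihL (psi t₀) hu hu1 hz' (2*η) (by linarith)
          have humax : psi t₀ ≤ 2^m := by linarith
          have hs : psi ((2:ℝ)^(m+1) - u'/2) = u' :=
            psi_V_left (m := m+1) (x := u') hu'0
              (by rw [show m+1-1 = m by ring]; linarith)
          refine ⟨2^(m+1) - u'/2, by linarith, by linarith, by linarith, ?_, ?_⟩
          · rw [Function.iterate_succ_apply, hs, hu'z]
          · rw [Function.iterate_succ_apply, hs]; exact hu'nz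

/-- accumulation of next-level zeros at every zero -/
lemma accumulate {N : ℕ} (hN : 1 ≤ N) (t : Set.Icc (0:ℝ) 2) (ht : t ∈ Zlevel (N-1)) :
    ∀ η : ℝ, 0 < η → ∃ s : Set.Icc (0:ℝ) 2, |(s:ℝ) - (t:ℝ)| < η ∧ s ∈ Zlevel N ∧ s ∉ Zlevel (N-1) := by
  obtain ⟨M, rfl⟩ : ∃ M, N = M+1 := ⟨N-1, (Nat.succ_pred_eq_of_pos hN).symm⟩
  simp only [Nat.add_sub_cancel] at ht ⊢
  intro η hη
  have ht' : phi^[M+1] (t:ℝ) = 0 := ht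
  obtain ⟨τ, hτ0, hτ2⟩ : ∃ τ : ℝ, 0 ≤ τ ∧ τ ≤ 2 := ⟨(t:ℝ), t.2.1, t.2.2⟩
  rcases le_or_gt (t:ℝ) 1 with hle | hgt
  · -- t in [0,1]
    have hz : psi^[M+1] (t:ℝ) = 0 := by rw [← phi_iter_psi hle]; exact ht'
    rcases eq_or_lt_of_le (t.2.1) with h0 | h0
    · -- t = 0
      obtain ⟨x, hx0, hxlt, hxz, hxnz⟩ := Asmall (M+1) (lt_min hη one_pos)
      have hx1 : x ≤ 1 := le_of_lt (lt_of_lt_of_le hxlt (min_le_right _ _))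
      refine ⟨⟨x, by constructor <;> linarith⟩, ?_, ?_, ?_⟩
      · rw [← h0]
        simp only
        rw [sub_zero, abs_of_pos hx0]
        exact lt_of_lt_of_le hxlt (min_le_left _ _)
      · show phi^[M+1+1] x = 0
        rw [phi_iter_psi (by linarith)]
        exact hxz
      · show ¬ phi^[M+1] x = 0
        rw [phi_iter_psi (by linarith)]
        exact hxnz
    · -- 0 < t ≤ 1, use left approximants
      obtain ⟨s', hs'0, hs'lt, hs'η, hs'z, hs'nz⟩ :=
        (GG M).1 (t:ℝ) h0 hle hz η hη
      refine ⟨⟨s', by constructor <;> [linarith; linarith [hle]]⟩, ?_, ?_, ?_⟩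
      · simp only
        rw [abs_of_neg (by linarith : s' - (t:ℝ) < 0)]
        linarith
      · show phi^[M+1+1] s' = 0
        rw [phi_iter_psi (by linarith [hle])]
        exact hs'z
      · show ¬ phi^[M+1] s' = 0
        rw [phi_iter_psi (by linarith [hle])]
        exact hs'nz
  · -- t in (1,2], reflect
    set u : ℝ := 2 - (t:ℝ) with hu
    have hu0 : 0 ≤ u := by simp [hu]; linarith [t.2.2]
    have hu1 : u < 1 := by simp only [hu]; linarith
    have hz : psi^[M+1] u = 0 := by
      rw [← phi_iter_sym (le_of_lt hgt) M]
      exact ht'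
    rcases eq_or_lt_of_le hu0 with h0 | h0
    · -- u = 0, i.e. t = 2
      obtain ⟨x, hx0, hxlt, hxz, hxnz⟩ := Asmall (M+1) (lt_min hη one_pos)
      have hx1 : x ≤ 1 := le_of_lt (lt_of_lt_of_le hxlt (min_le_right _ _))
      refine ⟨⟨2 - x, by constructor <;> linarith⟩, ?_, ?_, ?_⟩
      · simp only
        have ht2 : (t:ℝ) = 2 := by simp only [hu] at h0; linarith
        rw [ht2]
        rw [show (2:ℝ) - x - 2 = -x by ring, abs_neg, abs_of_pos hx0]
        exact lt_of_lt_of_le hxlt (min_le_left _ _)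
      · show phi^[M+1+1] (2 - x) = 0
        rw [phi_iter_sym (by linarith) (M+1), show (2:ℝ) - (2 - x) = x by ring]
        exact hxz
      · show ¬ phi^[M+1] (2 - x) = 0
        rw [phi_iter_sym (by linarith) M, show (2:ℝ) - (2 - x) = x by ring]
        exact hxnz
    · -- 0 < u < 1
      obtain ⟨s', hs'0, hs'lt, hs'η, hs'z, hs'nz⟩ :=
        (GG M).1 u h0 (le_of_lt hu1) hz η hη
      refine ⟨⟨2 - s', by constructor <;> [linarith [hu1]; linarith]⟩, ?_, ?_, ?_⟩
      · simp only
        rw [show (2:ℝ) - s' - (t:ℝ) = u - s' by simp [hu]; ring,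
          abs_of_pos (by linarith : (0:ℝ) < u - s')]
        linarith
      · show phi^[M+1+1] (2 - s') = 0
        rw [phi_iter_sym (by linarith [hu1]) (M+1), show (2:ℝ) - (2 - s') = s' by ring]
        exact hs'z
      · show ¬ phi^[M+1] (2 - s') = 0
        rw [phi_iter_sym (by linarith [hu1]) M, show (2:ℝ) - (2 - s') = s' by ring]
        exact hs'nz

/-- On the completion `X` of `C[0,2]` in the norm `|‖·‖|` (presented abstractly
via a dense lattice-isometric embedding `j`), the sequential Lorentz seminorm
`l(x) = inf { lim ‖xₙ‖ : 0 ≤ xₙ ↑ |x| }` is not a norm: `l(𝟙) = 0`, i.e. for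
every `ε > 0` there is a nonnegative increasing sequence with supremum
`|j 𝟙| = j 𝟙` all of whose norms are `< ε`. -/
theorem stmt15 {X : Type*} [NormedAddCommGroup X] [Lattice X] [HasSolidNorm X]
    [IsOrderedAddMonoid X] [NormedSpace ℝ X]
    [CompleteSpace X]
    (j : C(Set.Icc (0 : ℝ) 2, ℝ) →ₗ[ℝ] X)
    (hjiso : ∀ f, ‖j f‖ = tnorm f)
    (hjlat : ∀ f, j |f| = |j f|)
    (hjdense : DenseRange j) :
    ∀ ε : ℝ, 0 < ε →
      ∃ xs : ℕ → X, (∀ n, 0 ≤ xs n) ∧ Monotone xs ∧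
        IsLUB (Set.range xs) |j 1| ∧ ∀ n, ‖xs n‖ < ε := by
  intro ε hε
  classical
  -- choose N
  obtain ⟨N, hN1, hNε⟩ : ∃ N : ℕ, 1 ≤ N ∧ (((N + 1).factorial : ℝ))⁻¹ < ε := by
    refine ⟨max 1 ⌈ε⁻¹⌉₊, le_max_left _ _, ?_⟩
    set N := max 1 ⌈ε⁻¹⌉₊
    have h1 : ε⁻¹ < ((N+1).factorial : ℝ) := by
      have h2 : ε⁻¹ ≤ (⌈ε⁻¹⌉₊ : ℝ) := Nat.le_ceil _
      have h3 : (⌈ε⁻¹⌉₊ : ℝ) ≤ (N : ℝ) := by exact_mod_cast Nat.cast_le.2 (le_max_right _ _)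
      have h4 : ((N:ℝ)) < ((N+1).factorial : ℝ) := by
        have := Nat.self_le_factorial (N+1)
        have : (N+1 : ℕ) ≤ (N+1).factorial := this
        calc (N:ℝ) < ((N:ℝ)+1) := by linarith
          _ = ((N+1 : ℕ) : ℝ) := by push_cast; ring
          _ ≤ ((N+1).factorial : ℝ) := by exact_mod_cast this
      linarith
    have hfp : (0:ℝ) < ((N+1).factorial : ℝ) := by exact_mod_cast Nat.factorial_pos _
    exact (inv_lt_comm₀ hε hfp).1 h1
  set S : Set (Set.Icc (0:ℝ) 2) := Zlevel (N-1) with hS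
  have hScl : IsClosed S := Zlevel_closed _
  have hSne : S.Nonempty := ⟨z0, z0_mem _⟩
  -- the approximating functions
  set F : ℕ → C(Set.Icc (0:ℝ) 2, ℝ) := fun k =>
    ⟨fun t => min 1 ((k+1 : ℝ) * Metric.infDist t S),
     continuous_const.min (continuous_const.mul (Metric.continuous_infDist_pt S))⟩ with hF
  have hFapp : ∀ k t, F k t = min 1 ((k+1 : ℝ) * Metric.infDist t S) := fun k t => rfl
  have hF0 : ∀ k, (0:C(Set.Icc (0:ℝ) 2, ℝ)) ≤ F k := by
    intro k
    rw [ContinuousMap.le_def]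
    intro t
    rw [ContinuousMap.zero_apply, hFapp]
    exact le_min (by norm_num) (mul_nonneg (by positivity) Metric.infDist_nonneg)
  have hF1 : ∀ k, F k ≤ 1 := by
    intro k
    rw [ContinuousMap.le_def]
    intro t
    rw [ContinuousMap.one_apply, hFapp]
    exact min_le_left _ _
  have hFmono : Monotone F := by
    intro k k' hk
    rw [ContinuousMap.le_def]
    intro t
    rw [hFapp, hFapp]
    refine min_le_min (le_refl _) (mul_le_mul_of_nonneg_right ?_ Metric.infDist_nonneg)
    have : (k:ℝ) ≤ (k':ℝ) := by exact_mod_cast hk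
    linarith
  have hFS : ∀ k, ∀ t ∈ S, F k t = 0 := by
    intro k t ht
    rw [hFapp, Metric.infDist_zero_of_mem ht]
    simp
  have hFlim : ∀ t, t ∉ S → ∃ k, F k t = 1 := by
    intro t ht
    have hd : 0 < Metric.infDist t S := (hScl.notMem_iff_infDist_pos hSne).1 ht
    obtain ⟨k, hk⟩ := exists_nat_ge (Metric.infDist t S)⁻¹
    refine ⟨k, ?_⟩
    rw [hFapp]
    have h1 : 1 ≤ (k+1 : ℝ) * Metric.infDist t S := by
      have : (Metric.infDist t S)⁻¹ * Metric.infDist t S ≤ (k:ℝ) * Metric.infDist t S :=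
        mul_le_mul_of_nonneg_right hk (le_of_lt hd)
      rw [inv_mul_cancel₀ (ne_of_gt hd)] at this
      nlinarith
    exact min_eq_left h1
  -- norm bound
  have hFnorm : ∀ k, tnorm (F k) ≤ (((N + 1).factorial : ℝ))⁻¹ := by
    intro k
    apply tnorm_le
    intro n
    rcases le_or_gt (n+1) N with hn | hn
    · -- Zlevel n ⊆ S, so sSup = 0
      have hsub : Zlevel n ⊆ S := Zlevel_mono (by omega)
      have himg : (fun t : Set.Icc (0:ℝ) 2 => |F k t|) '' Zlevel n = {0} := by
        apply Set.eq_singleton_iff_nonempty_unique_mem.2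
        constructor
        · exact Set.Nonempty.image _ ⟨z0, z0_mem n⟩
        · rintro y ⟨t, htm, rfl⟩
          show |F k t| = 0
          rw [hFS k t (hsub htm)]; simp
      rw [himg]
      simp
      try positivity
    · -- n ≥ N, crude bound
      have h1 : sSup ((fun t : Set.Icc (0:ℝ) 2 => |F k t|) '' Zlevel n) ≤ 1 := by
        apply csSup_le (Set.Nonempty.image _ ⟨z0, z0_mem n⟩)
        rintro y ⟨t, htm, rfl⟩
        show |F k t| ≤ 1
        have h0' : 0 ≤ F k t := by
          rw [hFapp]
          exact le_min (by norm_num) (mul_nonneg (by positivity) Metric.infDist_nonneg)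
        rw [abs_of_nonneg h0']
        rw [hFapp]
        exact min_le_left _ _
      have h0 : (0:ℝ) ≤ sSup ((fun t : Set.Icc (0:ℝ) 2 => |F k t|) '' Zlevel n) :=
        le_csSup_of_le (tnorm_term_bddAbove _ n) ⟨z0, z0_mem n, rfl⟩ (abs_nonneg _)
      have hfle : (((n + 1).factorial : ℝ))⁻¹ ≤ (((N + 1).factorial : ℝ))⁻¹ := by
        apply inv_anti₀ (by exact_mod_cast Nat.factorial_pos _)
        exact_mod_cast Nat.factorial_le (by omega)
      calc (((n + 1).factorial : ℝ))⁻¹ * sSup ((fun t : Set.Icc (0:ℝ) 2 => |F k t|) '' Zlevel n)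
          ≤ (((n + 1).factorial : ℝ))⁻¹ * 1 := by
            exact mul_le_mul_of_nonneg_left h1 (by positivity)
        _ = (((n + 1).factorial : ℝ))⁻¹ := by ring
        _ ≤ (((N + 1).factorial : ℝ))⁻¹ := hfle
  -- lattice transfer
  have hpos : ∀ f : C(Set.Icc (0:ℝ) 2, ℝ), 0 ≤ f → 0 ≤ j f := by
    intro f hf
    have h := hjlat f
    rw [abs_of_nonneg hf] at h
    rw [h]
    exact abs_nonneg _
  have hmono : ∀ f g : C(Set.Icc (0:ℝ) 2, ℝ), f ≤ g → j f ≤ j g := by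
    intro f g hfg
    have := hpos (g - f) (by simp [sub_nonneg, hfg])
    rw [map_sub] at this
    exact sub_nonneg.1 this
  have jsup : ∀ f g : C(Set.Icc (0:ℝ) 2, ℝ), j (f ⊔ g) = j f ⊔ j g := by
    intro f g
    rw [sup_eq_half_smul_add_add_abs_sub' ℝ f g, map_smul, map_add, map_add, hjlat,
      map_sub, ← sup_eq_half_smul_add_add_abs_sub' ℝ (j f) (j g)]
  have jinf : ∀ f g : C(Set.Icc (0:ℝ) 2, ℝ), j (f ⊓ g) = j f ⊓ j g := by
    intro f g
    rw [inf_eq_half_smul_add_sub_abs_sub' ℝ f g, map_smul, map_sub, map_add, hjlat,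
      map_sub, ← inf_eq_half_smul_add_sub_abs_sub' ℝ (j f) (j g)]
  have hj1 : |j 1| = j 1 := by
    rw [← hjlat 1, abs_of_nonneg (zero_le_one' C(Set.Icc (0:ℝ) 2, ℝ))]
  refine ⟨fun k => j (F k), ?_, ?_, ?_, ?_⟩
  · exact fun k => hpos _ (hF0 k)
  · exact fun k k' hk => hmono _ _ (hFmono hk)
  · constructor
    · rintro x ⟨k, rfl⟩
      rw [hj1]
      exact hmono _ _ (hF1 k)
    · intro b hb
      rw [hj1]
      -- c := positive part of (j 1 - b)
      set c : X := (j 1 - b) ⊔ 0 with hc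
      have hc0 : (0:X) ≤ c := le_sup_right
      have hcle : ∀ k, c ≤ j (1 - F k) := by
        intro k
        have h1 : j 1 - b ≤ j 1 - j (F k) := by
          have := hb ⟨k, rfl⟩
          exact sub_le_sub_left this _
        have h2 : c ≤ (j 1 - j (F k)) ⊔ 0 := sup_le (le_sup_of_le_left h1) le_sup_right
        rwa [← map_sub, sup_of_le_left (hpos _ (by simp [sub_nonneg, hF1 k]))] at h2
      have hcj1 : c ≤ j 1 := le_trans (hcle 0) (hmono _ _ (sub_le_self _ (hF0 0)))
      suffices hcz : c = 0 by
        have : j 1 - b ≤ c := le_sup_left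
        rw [hcz] at this
        exact sub_nonpos.1 this
      rw [← norm_eq_zero (a := c)]
      have key : ∀ δ : ℝ, 0 < δ → ‖c‖ ≤ (1 + ((N + 1).factorial : ℝ)) * δ := by
        intro δ hδ
        obtain ⟨g, hg⟩ := hjdense.exists_dist_lt c hδ
        rw [dist_eq_norm] at hg
        set h : C(Set.Icc (0:ℝ) 2, ℝ) := (g ⊓ 1) ⊔ 0 with hh
        have hjh : j h = (j g ⊓ j 1) ⊔ 0 := by rw [hh, jsup, jinf, map_zero]
        have hce : c = (c ⊓ j 1) ⊔ 0 := by
          rw [inf_eq_left.2 hcj1, sup_eq_left.2 hc0]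
        have hhc : ‖j h - c‖ < δ := by
          have e1 : ‖j h - c‖ = ‖(j g ⊓ j 1) ⊔ 0 - ((c ⊓ j 1) ⊔ 0)‖ := by
            rw [hjh, ← hce]
          rw [e1]
          calc ‖(j g ⊓ j 1) ⊔ 0 - ((c ⊓ j 1) ⊔ 0)‖ ≤ ‖j g ⊓ j 1 - c ⊓ j 1‖ :=
                norm_sup_sub_sup_le_norm _ _ _
            _ ≤ ‖j g - c‖ := norm_inf_sub_inf_le_norm _ _ _
            _ = ‖c - j g‖ := norm_sub_rev _ _
            _ < δ := hg
        have hh0 : (0:C(Set.Icc (0:ℝ) 2, ℝ)) ≤ h := le_sup_right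
        have hh1 : h ≤ 1 := sup_le (inf_le_right) zero_le_one
        -- tnorm of the excess is small
        have key2 : ∀ k, tnorm ((h - (1 - F k)) ⊔ 0) ≤ δ := by
          intro k
          rw [← hjiso]
          have e2 : j ((h - (1 - F k)) ⊔ 0) = (j h - j (1 - F k)) ⊔ 0 := by
            rw [jsup, map_sub, map_zero]
          rw [e2]
          have hyz : j h - j (1 - F k) ≤ j h - c := sub_le_sub_left (hcle k) _
          have h3 : (j h - j (1 - F k)) ⊔ 0 ≤ |j h - c| :=
            sup_le (le_trans hyz (le_abs_self _)) (abs_nonneg _)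
          have h4 : |(j h - j (1 - F k)) ⊔ 0| ≤ |(|j h - c|)| := by
            rw [abs_of_nonneg (le_sup_right : (0:X) ≤ _), abs_abs]
            exact h3
          calc ‖(j h - j (1 - F k)) ⊔ 0‖ ≤ ‖|j h - c|‖ := norm_le_norm_of_abs_le_abs h4
            _ = ‖j h - c‖ := norm_abs_eq_norm _
            _ ≤ δ := le_of_lt hhc
        -- pointwise bounds on h
        have keypt : ∀ (m : ℕ) (t : Set.Icc (0:ℝ) 2), t ∈ Zlevel m → t ∉ S →
            h t ≤ ((m+1).factorial : ℝ) * δ := by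
          intro m t htm hts
          obtain ⟨k, hk⟩ := hFlim t hts
          have hu := tnorm_eval (f := (h - (1 - F k)) ⊔ 0) htm
          have hle : ((m+1).factorial : ℝ) * tnorm ((h - (1 - F k)) ⊔ 0)
              ≤ ((m+1).factorial : ℝ) * δ :=
            mul_le_mul_of_nonneg_left (key2 k) (by positivity)
          have h5 : h t - (1 - F k t) ≤ ((h - (1 - F k)) ⊔ 0) t := by
            rw [ContinuousMap.sup_apply]
            refine le_sup_of_le_left (le_of_eq ?_)
            rw [ContinuousMap.sub_apply, ContinuousMap.sub_apply, ContinuousMap.one_apply,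
              hh, ContinuousMap.sup_apply]
          have h6 : ((h - (1 - F k)) ⊔ 0) t ≤ |((h - (1 - F k)) ⊔ 0) t| := le_abs_self _
          rw [hk] at h5
          have := le_trans hu hle
          linarith
        -- bound on S via accumulation and continuity
        have keyS : ∀ t ∈ S, h t ≤ ((N+1).factorial : ℝ) * δ := by
          intro t htS
          apply le_of_forall_pos_le_add
          intro ε' hε'
          have hcont : ContinuousAt (fun s : Set.Icc (0:ℝ) 2 => h s) t :=
            h.continuous.continuousAt
          rw [Metric.continuousAt_iff] at hcont
          obtain ⟨δ', hδ', hδ'c⟩ := hcont ε' hε'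
          obtain ⟨s, hst, hsN, hsS⟩ := accumulate hN1 t htS δ' hδ'
          have hdist : dist s t < δ' := by
            rw [Subtype.dist_eq, Real.dist_eq]
            exact hst
          have h7 := hδ'c hdist
          rw [Real.dist_eq] at h7
          have h8 : h s ≤ ((N+1).factorial : ℝ) * δ := keypt N s hsN hsS
          have := abs_lt.1 h7
          linarith [this.1]
        -- tnorm bound for h
        have htn : tnorm h ≤ ((N+1).factorial : ℝ) * δ := by
          apply tnorm_le
          intro m
          have hfacpos : (0:ℝ) < ((m+1).factorial : ℝ) := by exact_mod_cast Nat.factorial_pos _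
          have hfacN : (1:ℝ) ≤ ((N+1).factorial : ℝ) := by
            exact_mod_cast Nat.one_le_iff_ne_zero.2 (Nat.factorial_ne_zero _)
          have hssup : sSup ((fun t : Set.Icc (0:ℝ) 2 => |h t|) '' Zlevel m)
              ≤ max (((m+1).factorial : ℝ) * δ) (((N+1).factorial : ℝ) * δ) := by
            apply csSup_le (Set.Nonempty.image _ ⟨z0, z0_mem m⟩)
            rintro y ⟨t, htm, rfl⟩
            show |h t| ≤ _
            have hht0 : 0 ≤ h t := by
              have := (ContinuousMap.le_def.1 hh0) t
              rwa [ContinuousMap.zero_apply] at this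
            rw [abs_of_nonneg hht0]
            by_cases htS : t ∈ S
            · exact le_max_of_le_right (keyS t htS)
            · exact le_max_of_le_left (keypt m t htm htS)
          have hinv1 : (((m+1).factorial : ℝ))⁻¹ ≤ 1 := by
            rw [inv_le_one_iff₀]; right
            exact_mod_cast Nat.one_le_iff_ne_zero.2 (Nat.factorial_ne_zero _)
          calc (((m+1).factorial : ℝ))⁻¹ * sSup ((fun t : Set.Icc (0:ℝ) 2 => |h t|) '' Zlevel m)
              ≤ (((m+1).factorial : ℝ))⁻¹ *
                max (((m+1).factorial : ℝ) * δ) (((N+1).factorial : ℝ) * δ) :=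
                mul_le_mul_of_nonneg_left hssup (by positivity)
            _ ≤ ((N+1).factorial : ℝ) * δ := by
                rcases max_cases (((m+1).factorial : ℝ) * δ) (((N+1).factorial : ℝ) * δ) with
                  ⟨hm1, _⟩ | ⟨hm1, _⟩
                · rw [hm1]
                  rw [← mul_assoc, inv_mul_cancel₀ (ne_of_gt hfacpos), one_mul]
                  nlinarith
                · rw [hm1]
                  nlinarith [mul_nonneg (le_of_lt hδ) (le_trans zero_le_one hfacN)]
        -- conclude
        calc ‖c‖ ≤ ‖c - j h‖ + ‖j h‖ := by
              have := norm_add_le (c - j h) (j h)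
              simpa using this
          _ ≤ δ + ((N+1).factorial : ℝ) * δ := by
              have e9 : ‖c - j h‖ = ‖j h - c‖ := norm_sub_rev _ _
              rw [e9, hjiso]
              exact add_le_add (le_of_lt hhc) htn
          _ = (1 + ((N + 1).factorial : ℝ)) * δ := by ring
      -- from key: ‖c‖ = 0
      by_contra hcne
      have hcpos : 0 < ‖c‖ := lt_of_le_of_ne (norm_nonneg c) (Ne.symm hcne)
      have hKpos : (0:ℝ) < 1 + ((N + 1).factorial : ℝ) := by
        have : (0:ℝ) < ((N + 1).factorial : ℝ) := by exact_mod_cast Nat.factorial_pos _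
        linarith
      have := key (‖c‖ / (2 * (1 + ((N + 1).factorial : ℝ)))) (by positivity)
      rw [mul_div_assoc'] at this
      have h10 : (1 + ((N + 1).factorial : ℝ)) * ‖c‖ / (2 * (1 + ((N + 1).factorial : ℝ)))
          = ‖c‖ / 2 := by
        field_simp
      rw [h10] at this
      linarith
  · intro k
    calc ‖j (F k)‖ = tnorm (F k) := hjiso _
      _ ≤ (((N + 1).factorial : ℝ))⁻¹ := hFnorm k
      _ < ε := hNε
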